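/- Let B be a unital C*-algebra and (Q_n)_{n≥0} a sequence of self-adjoint projections in B with Q_0 = 1 and Q_{n+1} ≤ Q_n for all n. Then there is a unital *-homomorphism π from C(ℕ∞, ℂ), the C*-algebra of continuous complex-valued functions on the one-point compactification ℕ∞ = ℕ ∪ {∞} of ℕ (equivalently, the algebra of convergent complex sequences with the supremum norm), to B such that for every n ≥ 0, π maps the indicator function of {k ∈ ℕ : k ≥ n} ∪ {∞} to Q_n. -/

import Mathlib

open OnePoint in
/-- The clopen subset `{k ∈ ℕ : k ≥ n} ∪ {∞}` of the one-point compactification `ℕ∞`. -/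
def geSet (n : ℕ) : Set (OnePoint ℕ) := insert ∞ ((↑) '' Set.Ici n)

lemma geSet_eq_compl (n : ℕ) : geSet n = ((((↑) : ℕ → OnePoint ℕ) '' Set.Iio n))ᶜ := by
  ext x
  cases x with
  | infty =>
    simp [geSet, OnePoint.infty_notMem_image_coe]
  | coe k =>
    simp only [geSet, Set.mem_insert_iff, Set.mem_image, Set.mem_Ici, Set.mem_Iio,
      Set.mem_compl_iff, OnePoint.coe_ne_infty, OnePoint.coe_eq_coe, false_or]
    constructor
    · rintro ⟨m, hm, rfl⟩
      rintro ⟨j, hj, hjk⟩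
      omega
    · intro h
      refine ⟨k, ?_, rfl⟩
      by_contra hk
      exact h ⟨k, by omega, rfl⟩

lemma isClopen_geSet (n : ℕ) : IsClopen (geSet n) := by
  rw [geSet_eq_compl]
  constructor
  · exact (OnePoint.isOpen_image_coe.2 (isOpen_discrete _)).isClosed_compl
  · exact OnePoint.isOpen_compl_image_coe.2
      ⟨isClosed_discrete _, (Set.finite_Iio n).isCompact⟩

/-- The indicator function of `{k ∈ ℕ : k ≥ n} ∪ {∞}` as a continuous function on the
one-point compactification `ℕ∞ = ℕ ∪ {∞}`. -/
noncomputable def chiGe (n : ℕ) : C(OnePoint ℕ, ℂ) :=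
  ⟨(geSet n).indicator 1,
    continuous_indicator (by simp [isClopen_geSet n]) continuous_const.continuousOn⟩


set_option linter.unusedSectionVars false
section ChiGeAuxSection
namespace ChiGeAux

variable {B : Type*} [CStarAlgebra B] [PartialOrder B] [StarOrderedRing B]

lemma projMulOfLe {p q : B} (hp : IsSelfAdjoint p) (hq : IsSelfAdjoint q)
    (hpi : IsIdempotentElem p) (hqi : IsIdempotentElem q) (hle : p ≤ q) :
    p * q = p ∧ q * p = p := by
  have hpos : (0:B) ≤ p := by
    have : p = star p * p := by rw [hp.star_eq]; exact hpi.eq.symm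
    rw [this]; exact star_mul_self_nonneg p
  have h1 : (1 - q) * q * (1 - q) = 0 := by
    have : (1 - q) * q = 0 := by
      simp [sub_mul, hqi.eq]
    rw [this, zero_mul]
  have h2 : star (1 - q) * p * (1 - q) ≤ star (1 - q) * q * (1 - q) :=
    star_left_conjugate_le_conjugate hle (1 - q)
  have hq' : star (1 - q) = 1 - q := by simp [hq.star_eq]
  have h3 : (1 - q) * p * (1 - q) = 0 := by
    refine le_antisymm ?_ ?_
    · calc (1 - q) * p * (1 - q) = star (1 - q) * p * (1 - q) := by rw [hq']
      _ ≤ star (1 - q) * q * (1 - q) := h2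
      _ = 0 := by rw [hq']; exact h1
    · have := star_left_conjugate_nonneg hpos (1 - q)
      rwa [hq'] at this
  have h4 : p * (1 - q) = 0 := by
    have : star (p * (1 - q)) * (p * (1 - q)) = 0 := by
      rw [star_mul, hq', hp.star_eq]
      calc (1 - q) * p * (p * (1 - q)) = (1 - q) * (p * p) * (1 - q) := by noncomm_ring
      _ = (1 - q) * p * (1 - q) := by rw [hpi.eq]
      _ = 0 := h3
    exact (CStarRing.star_mul_self_eq_zero_iff _).mp this
  have hpq : p * q = p := by
    have := h4
    rw [mul_sub, mul_one, sub_eq_zero] at this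
    exact this.symm
  refine ⟨hpq, ?_⟩
  calc q * p = star (p * q) := by rw [star_mul, hp.star_eq, hq.star_eq]
  _ = star p := by rw [hpq]
  _ = p := hp.star_eq

lemma conjCentral (z : ℂ) (b : B) :
    ((starRingEnd ℂ z * z) • b) = star (algebraMap ℂ B z) * b * algebraMap ℂ B z := by
  rw [← algebraMap_star_comm, Algebra.smul_def, map_mul, mul_assoc, Algebra.commutes z b,
    ← mul_assoc]
  rfl

lemma realSmulNonneg {r : ℝ} (hr : 0 ≤ r) {b : B} (hb : 0 ≤ b) : 0 ≤ (r:ℂ) • b := by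
  have h : ((r:ℂ)) = starRingEnd ℂ ((Real.sqrt r : ℂ)) * (Real.sqrt r : ℂ) := by
    rw [Complex.conj_ofReal, ← Complex.ofReal_mul, Real.mul_self_sqrt hr]
  rw [h, conjCentral]
  exact star_left_conjugate_nonneg hb _

lemma realSmulLe {r : ℝ} (hr : 0 ≤ r) {a b : B} (hab : a ≤ b) : (r:ℂ) • a ≤ (r:ℂ) • b := by
  have h : ((r:ℂ)) = starRingEnd ℂ ((Real.sqrt r : ℂ)) * (Real.sqrt r : ℂ) := by
    rw [Complex.conj_ofReal, ← Complex.ofReal_mul, Real.mul_self_sqrt hr]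
  rw [h, conjCentral, conjCentral]
  exact star_left_conjugate_le_conjugate hab _

lemma normOneLe : ‖(1:B)‖ ≤ 1 := by
  have h : ‖(1:B)‖ = ‖(1:B)‖ * ‖(1:B)‖ := by
    have := CStarRing.norm_star_mul_self (x := (1:B))
    simpa using this
  nlinarith [norm_nonneg (1:B)]

section
variable (Q : ℕ → B) (hsa : ∀ n, IsSelfAdjoint (Q n)) (hidem : ∀ n, IsIdempotentElem (Q n))
  (hQ0 : Q 0 = 1) (hdec : ∀ n, Q (n + 1) ≤ Q n)

include hsa hidem hdec

lemma Qmul {m n : ℕ} (h : m ≤ n) : Q m * Q n = Q n ∧ Q n * Q m = Q n := by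
  have hanti : Antitone Q := antitone_nat_of_succ_le hdec
  have := projMulOfLe (hsa n) (hsa m) (hidem n) (hidem m) (hanti h)
  exact ⟨this.2, this.1⟩

lemma Pmul (m n : ℕ) :
    (Q m - Q (m+1)) * (Q n - Q (n+1)) = if m = n then Q n - Q (n+1) else 0 := by
  have expand : (Q m - Q (m+1)) * (Q n - Q (n+1)) =
      Q m * Q n - Q m * Q (n+1) - Q (m+1) * Q n + Q (m+1) * Q (n+1) := by noncomm_ring
  rcases lt_trichotomy m n with hmn | rfl | hmn
  · have h1 := (Qmul Q hsa hidem hdec (le_of_lt hmn)).1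
    have h2 := (Qmul Q hsa hidem hdec (Nat.succ_le_of_lt hmn : m + 1 ≤ n)).1
    have h3 := (Qmul Q hsa hidem hdec (by omega : m ≤ n + 1)).1
    have h4 := (Qmul Q hsa hidem hdec (by omega : m + 1 ≤ n + 1)).1
    rw [expand, h1, h2, h3, h4, if_neg (by omega)]
    abel
  · have h1 := (hidem m).eq
    have h2 := (Qmul Q hsa hidem hdec (by omega : m ≤ m + 1)).1
    have h3 := (Qmul Q hsa hidem hdec (by omega : m ≤ m + 1)).2
    have h4 := (hidem (m+1)).eq
    rw [expand, h1, h2, h3, h4, if_pos rfl]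
    abel
  · have h1 := (Qmul Q hsa hidem hdec (le_of_lt hmn)).2
    have h2 := (Qmul Q hsa hidem hdec (by omega : n ≤ m + 1)).2
    have h3 := (Qmul Q hsa hidem hdec (by omega : n + 1 ≤ m)).2
    have h4 := (Qmul Q hsa hidem hdec (by omega : n + 1 ≤ m + 1)).2
    rw [expand, h1, h2, h3, h4, if_neg (by omega)]
    abel

omit hsa hidem hdec

lemma Psum (n : ℕ) : ∑ k ∈ Finset.range n, (Q k - Q (k+1)) = Q 0 - Q n :=
  Finset.sum_range_sub' Q n

include hsa hidem hdec

lemma Pnonneg (n : ℕ) : (0:B) ≤ Q n - Q (n+1) := by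
  have hs : IsSelfAdjoint (Q n - Q (n+1)) := (hsa n).sub (hsa (n+1))
  have hi : (Q n - Q (n+1)) * (Q n - Q (n+1)) = Q n - Q (n+1) := by
    have := Pmul Q hsa hidem hdec n n
    rwa [if_pos rfl] at this
  calc (0:B) ≤ star (Q n - Q (n+1)) * (Q n - Q (n+1)) := star_mul_self_nonneg _
  _ = Q n - Q (n+1) := by rw [hs.star_eq, hi]

include hQ0

lemma PsumLeOne (F : Finset ℕ) : ∑ k ∈ F, (Q k - Q (k+1)) ≤ 1 := by
  obtain ⟨N, hN⟩ := F.exists_nat_subset_range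
  calc ∑ k ∈ F, (Q k - Q (k+1)) ≤ ∑ k ∈ Finset.range N, (Q k - Q (k+1)) :=
        Finset.sum_le_sum_of_subset_of_nonneg hN
          (fun i _ _ => Pnonneg Q hsa hidem hdec i)
  _ = Q 0 - Q N := Psum Q N
  _ ≤ 1 := by
      rw [hQ0]
      have : (0:B) ≤ Q N := by
        calc (0:B) ≤ star (Q N) * Q N := star_mul_self_nonneg _
        _ = Q N := by rw [(hsa N).star_eq, (hidem N).eq]
      simpa using this

lemma starXmulX (c : ℕ → ℂ) (F : Finset ℕ) :
    star (∑ n ∈ F, c n • (Q n - Q (n+1))) * (∑ n ∈ F, c n • (Q n - Q (n+1))) =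
      ∑ n ∈ F, ((‖c n‖^2 : ℝ) : ℂ) • (Q n - Q (n+1)) := by
  have hstar : star (∑ n ∈ F, c n • (Q n - Q (n+1))) =
      ∑ n ∈ F, (starRingEnd ℂ (c n)) • (Q n - Q (n+1)) := by
    rw [star_sum]
    refine Finset.sum_congr rfl fun n _ => ?_
    rw [star_smul, ((hsa n).sub (hsa (n+1))).star_eq]
    rfl
  rw [hstar, Finset.sum_mul_sum]
  refine Finset.sum_congr rfl fun m hm => ?_
  rw [Finset.sum_eq_single m]
  · rw [smul_mul_smul_comm, Pmul Q hsa hidem hdec, if_pos rfl, RCLike.conj_mul]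
    norm_cast
  · intro n hn hne
    rw [smul_mul_smul_comm, Pmul Q hsa hidem hdec, if_neg (fun h => hne h.symm), smul_zero]
  · intro hm'; exact absurd hm hm'

lemma normSumLe (c : ℕ → ℂ) (F : Finset ℕ) {C : ℝ} (hC : 0 ≤ C) (hc : ∀ n ∈ F, ‖c n‖ ≤ C) :
    ‖∑ n ∈ F, c n • (Q n - Q (n+1))‖ ≤ C := by
  set x := ∑ n ∈ F, c n • (Q n - Q (n+1)) with hx
  have h1 : star x * x = ∑ n ∈ F, ((‖c n‖^2 : ℝ) : ℂ) • (Q n - Q (n+1)) :=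
    starXmulX Q hsa hidem hQ0 hdec c F
  have h2 : star x * x ≤ ((C^2 : ℝ) : ℂ) • (1 : B) := by
    rw [h1]
    calc ∑ n ∈ F, ((‖c n‖^2 : ℝ) : ℂ) • (Q n - Q (n+1))
        ≤ ∑ n ∈ F, ((C^2 : ℝ) : ℂ) • (Q n - Q (n+1)) := by
          refine Finset.sum_le_sum fun n hn => ?_
          rw [← sub_nonneg, ← sub_smul, ← Complex.ofReal_sub]
          exact realSmulNonneg (by nlinarith [hc n hn, norm_nonneg (c n)])
            (Pnonneg Q hsa hidem hdec n)
      _ = ((C^2 : ℝ) : ℂ) • ∑ n ∈ F, (Q n - Q (n+1)) := (Finset.smul_sum).symm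
      _ ≤ ((C^2 : ℝ) : ℂ) • (1 : B) :=
          realSmulLe (sq_nonneg C) (PsumLeOne Q hsa hidem hQ0 hdec F)
  have h0 : (0:B) ≤ star x * x := star_mul_self_nonneg x
  have h3 : ‖star x * x‖ ≤ C^2 := by
    calc ‖star x * x‖ ≤ ‖((C^2 : ℝ) : ℂ) • (1 : B)‖ :=
          CStarAlgebra.norm_le_norm_of_nonneg_of_le h0 h2
      _ = C^2 * ‖(1:B)‖ := by
          rw [norm_smul]
          simp [abs_of_nonneg (sq_nonneg C)]
      _ ≤ C^2 * 1 := mul_le_mul_of_nonneg_left normOneLe (sq_nonneg C)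
      _ = C^2 := mul_one _
  have h4 : ‖x‖^2 ≤ C^2 := by
    rw [sq, ← CStarRing.norm_star_mul_self]; exact h3
  nlinarith [norm_nonneg x]

lemma summableAux {c : ℕ → ℂ} (hc : Filter.Tendsto c Filter.cofinite (nhds 0)) :
    Summable fun n => c n • (Q n - Q (n+1)) := by
  rw [summable_iff_vanishing]
  intro e he
  obtain ⟨ε, hε, hball⟩ := Metric.mem_nhds_iff.mp he
  have hev : {n : ℕ | ‖c n‖ < ε/2}ᶜ.Finite := by
    have := hc (Metric.ball_mem_nhds 0 (by linarith : (0:ℝ) < ε/2))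
    rw [Filter.mem_map, Filter.mem_cofinite] at this
    convert this using 2
    ext n
    simp [Metric.mem_ball, dist_eq_norm]
  refine ⟨hev.toFinset, fun t ht => ?_⟩
  apply hball
  rw [Metric.mem_ball, dist_zero_right]
  have : ‖∑ n ∈ t, c n • (Q n - Q (n+1))‖ ≤ ε/2 := by
    refine normSumLe Q hsa hidem hQ0 hdec c t (by linarith) fun n hn => ?_
    have : n ∉ {n : ℕ | ‖c n‖ < ε/2}ᶜ := by
      intro h
      exact (Finset.disjoint_left.mp ht hn) (hev.mem_toFinset.mpr h)
    simp only [Set.mem_compl_iff, Set.mem_setOf_eq, not_not] at this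
    linarith
  linarith

end
end ChiGeAux
end ChiGeAuxSection

/-- Let `B` be a unital C*-algebra and `(Q_n)` a decreasing sequence of self-adjoint
projections in `B` with `Q_0 = 1`.  Then there is a unital *-homomorphism
`π : C(ℕ∞, ℂ) → B` sending, for every `n`, the indicator function of
`{k ∈ ℕ : k ≥ n} ∪ {∞}` to `Q_n`. -/
theorem exists_starAlgHom_of_decreasing_projections
    {B : Type*} [CStarAlgebra B] [PartialOrder B] [StarOrderedRing B]
    (Q : ℕ → B)
    (hsa : ∀ n, IsSelfAdjoint (Q n)) (hidem : ∀ n, IsIdempotentElem (Q n))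
    (hQ0 : Q 0 = 1) (hdec : ∀ n, Q (n + 1) ≤ Q n) :
    ∃ π : C(OnePoint ℕ, ℂ) →⋆ₐ[ℂ] B, ∀ n : ℕ, π (chiGe n) = Q n := by
  classical
  have htend : ∀ f : C(OnePoint ℕ, ℂ),
      Filter.Tendsto (fun n : ℕ => f (n : OnePoint ℕ) - f OnePoint.infty) Filter.cofinite (nhds 0) := by
    intro f
    have h1 : Filter.Tendsto (fun n : ℕ => (n : OnePoint ℕ)) Filter.cofinite (nhds OnePoint.infty) := by
      have := OnePoint.tendsto_coe_infty (X := ℕ)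
      rwa [Filter.coclosedCompact_eq_cocompact, Filter.cocompact_eq_cofinite ℕ] at this
    have h2 := ((f.continuous.tendsto OnePoint.infty).comp h1).sub_const (f OnePoint.infty)
    simpa using h2
  have hsum : ∀ f : C(OnePoint ℕ, ℂ),
      Summable (fun n : ℕ => (f (n : OnePoint ℕ) - f OnePoint.infty) • (Q n - Q (n+1))) :=
    fun f => ChiGeAux.summableAux Q hsa hidem hQ0 hdec (htend f)
  have hST : ∀ f g : C(OnePoint ℕ, ℂ),
      (∑' n : ℕ, (f (n : OnePoint ℕ) - f OnePoint.infty) • (Q n - Q (n+1))) *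
        (∑' n : ℕ, (g (n : OnePoint ℕ) - g OnePoint.infty) • (Q n - Q (n+1))) =
      ∑' n : ℕ, ((f (n : OnePoint ℕ) - f OnePoint.infty) * (g (n : OnePoint ℕ) - g OnePoint.infty)) •
        (Q n - Q (n+1)) := by
    intro f g
    rw [← Summable.tsum_mul_right _ (hsum f)]
    refine tsum_congr fun n => ?_
    rw [smul_mul_assoc]
    have hPT : (Q n - Q (n+1)) * (∑' m : ℕ, (g (m : OnePoint ℕ) - g OnePoint.infty) • (Q m - Q (m+1))) =
        (g (n : OnePoint ℕ) - g OnePoint.infty) • (Q n - Q (n+1)) := by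
      rw [← Summable.tsum_mul_left _ (hsum g)]
      rw [tsum_eq_single n ?_]
      · rw [mul_smul_comm, ChiGeAux.Pmul Q hsa hidem hdec n n, if_pos rfl]
      · intro m hmn
        rw [mul_smul_comm, ChiGeAux.Pmul Q hsa hidem hdec n m, if_neg (fun h => hmn h.symm),
          smul_zero]
    rw [hPT, smul_smul]
  refine ⟨{
      toFun := fun f => f OnePoint.infty • (1:B) +
        ∑' n : ℕ, (f (n : OnePoint ℕ) - f OnePoint.infty) • (Q n - Q (n+1))
      map_one' := by simp
      map_mul' := fun f g => by
        have hsum2 : Summable (fun n : ℕ =>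
            ((f (n : OnePoint ℕ) - f OnePoint.infty) * (g (n : OnePoint ℕ) - g OnePoint.infty)) • (Q n - Q (n+1))) :=
          ChiGeAux.summableAux Q hsa hidem hQ0 hdec
            (by simpa using (htend f).mul (htend g))
        have hsumaT : Summable (fun n : ℕ =>
            (f OnePoint.infty * (g (n : OnePoint ℕ) - g OnePoint.infty)) • (Q n - Q (n+1))) :=
          ((hsum g).const_smul (f OnePoint.infty)).congr fun n => by rw [smul_smul]
        have hsumbS : Summable (fun n : ℕ =>
            (g OnePoint.infty * (f (n : OnePoint ℕ) - f OnePoint.infty)) • (Q n - Q (n+1))) :=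
          ((hsum f).const_smul (g OnePoint.infty)).congr fun n => by rw [smul_smul]
        have haT : f OnePoint.infty • (∑' n : ℕ, (g (n : OnePoint ℕ) - g OnePoint.infty) • (Q n - Q (n+1))) =
            ∑' n : ℕ, (f OnePoint.infty * (g (n : OnePoint ℕ) - g OnePoint.infty)) • (Q n - Q (n+1)) := by
          rw [← Summable.tsum_const_smul (f OnePoint.infty) (hsum g)]
          exact tsum_congr fun n => smul_smul _ _ _
        have hbS : g OnePoint.infty • (∑' n : ℕ, (f (n : OnePoint ℕ) - f OnePoint.infty) • (Q n - Q (n+1))) =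
            ∑' n : ℕ, (g OnePoint.infty * (f (n : OnePoint ℕ) - f OnePoint.infty)) • (Q n - Q (n+1)) := by
          rw [← Summable.tsum_const_smul (g OnePoint.infty) (hsum f)]
          exact tsum_congr fun n => smul_smul _ _ _
        simp only [ContinuousMap.mul_apply]
        rw [add_mul, mul_add, mul_add, smul_mul_smul_comm, mul_one, smul_mul_assoc, one_mul,
          mul_smul_comm, mul_one, hST f g, haT, hbS]
        rw [← Summable.tsum_add hsumbS hsum2, add_assoc, ← Summable.tsum_add hsumaT (hsumbS.add hsum2)]
        congr 1
        refine tsum_congr fun n => ?_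
        rw [← add_smul, ← add_smul]
        congr 1
        ring
      map_zero' := by simp
      map_add' := fun f g => by
        simp only [ContinuousMap.add_apply]
        have hcoef : ∀ n : ℕ,
            ((f (n : OnePoint ℕ) + g (n : OnePoint ℕ)) - (f OnePoint.infty + g OnePoint.infty)) • (Q n - Q (n+1)) =
            (f (n : OnePoint ℕ) - f OnePoint.infty) • (Q n - Q (n+1)) +
              (g (n : OnePoint ℕ) - g OnePoint.infty) • (Q n - Q (n+1)) := fun n => by
          rw [← add_smul]; congr 1; ring
        rw [tsum_congr hcoef, Summable.tsum_add (hsum f) (hsum g), add_smul]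
        abel
      commutes' := fun z => by
        simp [Algebra.algebraMap_eq_smul_one]
      map_star' := fun f => by
        rw [star_add, star_smul, star_one, tsum_star]
        simp only [ContinuousMap.star_apply]
        congr 1
        refine tsum_congr fun n => ?_
        rw [star_smul, ((hsa n).sub (hsa (n+1))).star_eq, star_sub]
    }, ?_⟩
  intro n
  show chiGe n OnePoint.infty • (1:B) +
      ∑' k : ℕ, (chiGe n (k : OnePoint ℕ) - chiGe n OnePoint.infty) • (Q k - Q (k+1)) = Q n
  have hinf : chiGe n OnePoint.infty = 1 := by
    have hmem : (OnePoint.infty : OnePoint ℕ) ∈ geSet n := Set.mem_insert _ _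
    simp [chiGe, Set.indicator_of_mem hmem]
  have hcoe : ∀ k : ℕ, chiGe n (k : OnePoint ℕ) = if n ≤ k then 1 else 0 := by
    intro k
    by_cases h : n ≤ k
    · have hmem : (k : OnePoint ℕ) ∈ geSet n :=
        Set.mem_insert_iff.mpr (Or.inr ⟨k, h, rfl⟩)
      simp [chiGe, Set.indicator_of_mem hmem, h]
    · have hmem : (k : OnePoint ℕ) ∉ geSet n := by
        rw [geSet_eq_compl]
        simp only [Set.mem_compl_iff, not_not]
        exact ⟨k, Set.mem_Iio.mpr (by omega), rfl⟩
      simp [chiGe, Set.indicator_of_notMem hmem, h]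
  have hts : ∑' k : ℕ, (chiGe n (k : OnePoint ℕ) - chiGe n OnePoint.infty) • (Q k - Q (k+1)) =
      ∑ k ∈ Finset.range n, (chiGe n (k : OnePoint ℕ) - chiGe n OnePoint.infty) • (Q k - Q (k+1)) := by
    refine tsum_eq_sum fun k hk => ?_
    have hk' : ¬ k < n := by simpa [Finset.mem_range] using hk
    rw [hcoe k, hinf, if_pos (by omega), sub_self, zero_smul]
  rw [hts]
  have hsumeq : ∑ k ∈ Finset.range n,
      (chiGe n (k : OnePoint ℕ) - chiGe n OnePoint.infty) • (Q k - Q (k+1)) =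
      ∑ k ∈ Finset.range n, -(Q k - Q (k+1)) := by
    refine Finset.sum_congr rfl fun k hk => ?_
    have hkn : ¬ n ≤ k := by
      have := Finset.mem_range.mp hk
      omega
    rw [hcoe k, hinf, if_neg hkn]
    simp
  rw [hsumeq, hinf, one_smul, Finset.sum_neg_distrib, ChiGeAux.Psum Q n, hQ0]
  abel
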